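/- The OCATA A_φ constructed from an EMITL formula φ in negative normal form accepts exactly the timed language of φ: ⟦A_φ⟧ = ⟦φ⟧. -/

import Mathlib

/-- Transition formulae Γ(S) of one-clock alternating timed automata. -/
inductive Gamma (S : Type*) where
  | top : Gamma S
  | bot : Gamma S
  | or (γ₁ γ₂ : Gamma S) : Gamma S
  | and (γ₁ γ₂ : Gamma S) : Gamma S
  | loc (s : S) : Gamma S
  | le (c : ℕ) : Gamma S
  | lt (c : ℕ) : Gamma S
  | ge (c : ℕ) : Gamma S
  | gt (c : ℕ) : Gamma S
  | reset (γ : Gamma S) : Gamma S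

/-- Renaming of locations in a transition formula. -/
def Gamma.map {S T : Type*} (f : S → T) : Gamma S → Gamma T
  | .top => .top
  | .bot => .bot
  | .or γ₁ γ₂ => .or (γ₁.map f) (γ₂.map f)
  | .and γ₁ γ₂ => .and (γ₁.map f) (γ₂.map f)
  | .loc s => .loc (f s)
  | .le c => .le c
  | .lt c => .lt c
  | .ge c => .ge c
  | .gt c => .gt c
  | .reset γ => .reset (γ.map f)

/-- The dual transition formula: swaps ⊤/⊥ and ∨/∧, fixes locations, negates clock
comparisons, commutes with reset. -/
def Gamma.dual {S : Type*} : Gamma S → Gamma S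
  | .top => .bot
  | .bot => .top
  | .or γ₁ γ₂ => .and γ₁.dual γ₂.dual
  | .and γ₁ γ₂ => .or γ₁.dual γ₂.dual
  | .loc s => .loc s
  | .le c => .gt c
  | .lt c => .ge c
  | .ge c => .lt c
  | .gt c => .le c
  | .reset γ => .reset γ.dual

def bigOr {S : Type*} (l : List (Gamma S)) : Gamma S := l.foldr .or .bot
def bigAnd {S : Type*} (l : List (Gamma S)) : Gamma S := l.foldr .and .top

/-- An interval with endpoints in ℕ ∪ {∞}. -/
structure Ivl where
  lo : ℕ
  loStrict : Bool
  hi : Option ℕ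
  hiStrict : Bool

/-- Membership of a real in the interval. -/
def Ivl.mem (I : Ivl) (t : ℝ) : Prop :=
  (if I.loStrict then (I.lo : ℝ) < t else (I.lo : ℝ) ≤ t) ∧
  (match I.hi with
   | none => True
   | some h => if I.hiStrict then t < (h : ℝ) else t ≤ (h : ℝ))

/-- The clock constraint `x ∈ I` as a transition formula. -/
def Ivl.toGamma {S : Type*} (I : Ivl) : Gamma S :=
  .and (if I.loStrict then .gt I.lo else .ge I.lo)
       (match I.hi with
        | none => .top
        | some h => if I.hiStrict then .lt h else .le h)

/-- A non-deterministic finite automaton over the alphabet {1,…,n}, with locations in ℕ,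
transitions given as successor lists, and decidable final locations. -/
structure NFAL (n : ℕ) where
  init : ℕ
  trans : ℕ → Fin n → List ℕ
  final : ℕ → Bool

/-- EMITL formulae in negative normal form: ⊤, ⊥, literals, ∧, ∨, automata
modalities A_I and dual automata modalities Ã_I. -/
inductive NNF (AP : Type) : Type where
  | top : NNF AP
  | bot : NNF AP
  | atom (p : AP) : NNF AP
  | natom (p : AP) : NNF AP
  | and (φ ψ : NNF AP) : NNF AP
  | or (φ ψ : NNF AP) : NNF AP
  | auto (n : ℕ) (A : NFAL n) (I : Ivl) (args : Fin n → NNF AP) : NNF AP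
  | dauto (n : ℕ) (A : NFAL n) (I : Ivl) (args : Fin n → NNF AP) : NNF AP

/-- The locations of the OCATA A_φ contributed by the subformulae of φ (excluding the
initial location s^init): locations of each automaton subformula together with the
locations contributed by its arguments. -/
def locT {AP : Type} : NNF AP → Type
  | .top => Empty
  | .bot => Empty
  | .atom _ => Empty
  | .natom _ => Empty
  | .and φ ψ => locT φ ⊕ locT ψ
  | .or φ ψ => locT φ ⊕ locT ψ
  | .auto n _ _ args => ℕ ⊕ (Σ a : Fin n, locT (args a))
  | .dauto n _ _ args => ℕ ⊕ (Σ a : Fin n, locT (args a))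

/-- The inductive construction of the OCATA A_φ: for each formula φ, the pair of
(i) the entry transition formula δ(φ,σ) and (ii) the transition function on internal
locations, as in the paper (with the substitutions s_F ← s_F ∨ x ∈ I for A_I and
s_F ← s_F ∧ x ∉ I for Ã_I). -/
def ocataDefs {AP : Type} :
    (φ : NNF AP) →
      ((AP → Bool) → Gamma (locT φ)) × (locT φ → (AP → Bool) → Gamma (locT φ))
  | .top => (fun _ => .top, fun ℓ _ => ℓ.elim)
  | .bot => (fun _ => .bot, fun ℓ _ => ℓ.elim)
  | .atom p => (fun σ => if σ p then .top else .bot, fun ℓ _ => ℓ.elim)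
  | .natom p => (fun σ => if σ p then .bot else .top, fun ℓ _ => ℓ.elim)
  | .and φ ψ =>
      (fun σ => .and ((ocataDefs φ).1 σ |>.map Sum.inl) ((ocataDefs ψ).1 σ |>.map Sum.inr),
       fun ℓ σ => match ℓ with
         | .inl ℓ => (ocataDefs φ).2 ℓ σ |>.map Sum.inl
         | .inr ℓ => (ocataDefs ψ).2 ℓ σ |>.map Sum.inr)
  | .or φ ψ =>
      (fun σ => .or ((ocataDefs φ).1 σ |>.map Sum.inl) ((ocataDefs ψ).1 σ |>.map Sum.inr),
       fun ℓ σ => match ℓ with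
         | .inl ℓ => (ocataDefs φ).2 ℓ σ |>.map Sum.inl
         | .inr ℓ => (ocataDefs ψ).2 ℓ σ |>.map Sum.inr)
  | .auto n A I args =>
      let stepA : ℕ → (AP → Bool) → Gamma (ℕ ⊕ (Σ a : Fin n, locT (args a))) :=
        fun s σ =>
          bigOr (List.ofFn fun a : Fin n =>
            .and ((ocataDefs (args a)).1 σ |>.map fun m => Sum.inr ⟨a, m⟩)
                 (bigOr ((A.trans s a).map fun s' =>
                   if A.final s' then .or (.loc (Sum.inl s')) I.toGamma
                   else .loc (Sum.inl s'))))
      (fun σ => .reset (stepA A.init σ),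
       fun ℓ σ => match ℓ with
         | .inl s => stepA s σ
         | .inr ⟨a, m⟩ => (ocataDefs (args a)).2 m σ |>.map fun m' => Sum.inr ⟨a, m'⟩)
  | .dauto n A I args =>
      let stepD : ℕ → (AP → Bool) → Gamma (ℕ ⊕ (Σ a : Fin n, locT (args a))) :=
        fun s σ =>
          bigAnd (List.ofFn fun a : Fin n =>
            .or ((ocataDefs (args a)).1 σ |>.map fun m => Sum.inr ⟨a, m⟩)
                (bigAnd ((A.trans s a).map fun s' =>
                  if A.final s' then .and (.loc (Sum.inl s')) (Gamma.dual I.toGamma)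
                  else .loc (Sum.inl s'))))
      (fun σ => .reset (stepD A.init σ),
       fun ℓ σ => match ℓ with
         | .inl s => stepD s σ
         | .inr ⟨a, m⟩ => (ocataDefs (args a)).2 m σ |>.map fun m' => Sum.inr ⟨a, m'⟩)

/-- The final locations of A_φ: exactly the locations contributed by dual automata
(Ã_I) subformulae. -/
def finalP {AP : Type} : (φ : NNF AP) → locT φ → Prop
  | .top => fun _ => False
  | .bot => fun _ => False
  | .atom _ => fun _ => False
  | .natom _ => fun _ => False
  | .and φ ψ => fun ℓ => match ℓ with
      | .inl ℓ => finalP φ ℓ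
      | .inr ℓ => finalP ψ ℓ
  | .or φ ψ => fun ℓ => match ℓ with
      | .inl ℓ => finalP φ ℓ
      | .inr ℓ => finalP ψ ℓ
  | .auto _ _ _ args => fun ℓ => match ℓ with
      | .inl _ => False
      | .inr ⟨a, m⟩ => finalP (args a) m
  | .dauto _ _ _ args => fun ℓ => match ℓ with
      | .inl _ => True
      | .inr ⟨a, m⟩ => finalP (args a) m

/-- A timed word: non-decreasing, non-negative, unbounded (non-Zeno) timestamps. -/
structure TimedWord (α : Type*) where
  sym : ℕ → α
  tm  : ℕ → ℝ
  nonneg : ∀ i, 0 ≤ tm i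
  mono : Monotone tm
  nonZeno : ∀ r : ℝ, ∃ j, r ≤ tm j

def prevT {α : Type*} (ρ : TimedWord α) : ℕ → ℝ
  | 0 => 0
  | i + 1 => ρ.tm i

def delay {α : Type*} (ρ : TimedWord α) (i : ℕ) : ℝ := ρ.tm i - prevT ρ i

/-- `GSat M v γ` : the set of states `M` is a model of `γ` w.r.t. clock valuation `v`. -/
def GSat {S : Type*} (M : Set (S × ℝ)) : ℝ → Gamma S → Prop
  | _, .top => True
  | _, .bot => False
  | v, .or γ₁ γ₂ => GSat M v γ₁ ∨ GSat M v γ₂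
  | v, .and γ₁ γ₂ => GSat M v γ₁ ∧ GSat M v γ₂
  | v, .loc s => (s, v) ∈ M
  | v, .le c => v ≤ (c : ℝ)
  | v, .lt c => v < (c : ℝ)
  | v, .ge c => (c : ℝ) ≤ v
  | v, .gt c => (c : ℝ) < v
  | _, .reset γ => GSat M 0 γ

/-- A one-clock alternating timed automaton. -/
structure OCATA (L α : Type*) where
  init : L
  δ : L → α → Gamma L
  final : L → Prop

structure RunData (L α : Type*) where
  V : ℕ → Set (L × ℝ)
  edge : ℕ → (L × ℝ) → (L × ℝ) → Prop

def IsRun {L α : Type*} (A : OCATA L α) (ρ : TimedWord α) (R : RunData L α) : Prop :=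
  (A.init, 0) ∈ R.V 0 ∧
  ∀ i sv, sv ∈ R.V i →
    GSat {t | R.edge i sv t} (sv.2 + delay ρ i) (A.δ sv.1 (ρ.sym i)) ∧
    ∀ t, R.edge i sv t → t ∈ R.V (i + 1)

/-- Accepting: every infinite path in the run DAG visits final locations
infinitely often. -/
def RunAccepting {L α : Type*} (A : OCATA L α) (R : RunData L α) : Prop :=
  ∀ (i₀ : ℕ) (p : ℕ → L × ℝ), p 0 ∈ R.V i₀ →
    (∀ m, R.edge (i₀ + m) (p m) (p (m + 1))) →
    ∀ N, ∃ m, N ≤ m ∧ A.final (p m).1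

/-- The timed language of an OCATA. -/
def OCATALang {L α : Type*} (A : OCATA L α) : Set (TimedWord α) :=
  {ρ | ∃ R : RunData L α, IsRun A ρ R ∧ RunAccepting A R}

/-- Runs of an NFA (with successor-list transitions) on finite words. -/
def NFAL.RunOn {n : ℕ} (A : NFAL n) : ℕ → List (Fin n) → ℕ → Prop
  | q, [], q' => q = q'
  | q, a :: w, q' => ∃ q'' ∈ A.trans q a, A.RunOn q'' w q'

def NFAL.Accepts {n : ℕ} (A : NFAL n) (w : List (Fin n)) : Prop :=
  w ≠ [] ∧ ∃ qf, A.final qf = true ∧ A.RunOn A.init w qf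

def wordOf {α : Type*} (a : ℕ → α) (i j : ℕ) : List α :=
  (List.range (j + 1 - i)).map fun k => a (i + k)

/-- The automata-modality clause of the pointwise semantics. -/
def AutoWitL {n : ℕ} (A : NFAL n) (tm : ℕ → ℝ) (H : ℕ → Fin n → Prop)
    (I : Ivl) (i : ℕ) : Prop :=
  ∃ j, i ≤ j ∧ I.mem (tm j - tm i) ∧
    ∃ a : ℕ → Fin n, A.Accepts (wordOf a i j) ∧ ∀ ℓ, i ≤ ℓ → ℓ ≤ j → H ℓ (a ℓ)

/-- Pointwise semantics of EMITL formulae in negative normal form; the dual modality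
satisfies Ã_I(φ₁,…,φₙ) ≡ ¬A_I(¬φ₁,…,¬φₙ). -/
def NNF.sat {AP : Type} (ρ : TimedWord (AP → Bool)) : ℕ → NNF AP → Prop
  | _, .top => True
  | _, .bot => False
  | i, .atom p => ρ.sym i p = true
  | i, .natom p => ρ.sym i p = false
  | i, .and φ ψ => NNF.sat ρ i φ ∧ NNF.sat ρ i ψ
  | i, .or φ ψ => NNF.sat ρ i φ ∨ NNF.sat ρ i ψ
  | i, .auto _ A I args =>
      AutoWitL A ρ.tm (fun ℓ a => NNF.sat ρ ℓ (args a)) I i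
  | i, .dauto _ A I args =>
      ¬ AutoWitL A ρ.tm (fun ℓ a => ¬ NNF.sat ρ ℓ (args a)) I i

/-- The OCATA A_φ: locations are s^init (= `none`) together with the locations
contributed by the subformulae of φ; transitions as constructed by `ocataDefs`;
final locations are those contributed by dual automata subformulae. -/
def Aphi {AP : Type} (φ : NNF AP) : OCATA (Option (locT φ)) (AP → Bool) where
  init := none
  δ := fun s σ =>
    match s with
    | none => .reset (((ocataDefs φ).1 σ).map some)
    | some ℓ => ((ocataDefs φ).2 ℓ σ).map some
  final := fun s =>
    match s with
    | none => False
    | some ℓ => finalP φ ℓ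

/-! ### Auxiliary infrastructure for the proof -/

section Infra

open Classical

variable {AP : Type} {S T α : Type*}

theorem GSat_mono {M M' : Set (S × ℝ)} (h : M ⊆ M') :
    ∀ {v : ℝ} {γ : Gamma S}, GSat M v γ → GSat M' v γ := by
  intro v γ
  induction γ generalizing v with
  | top => intro _; trivial
  | bot => intro h; exact h.elim
  | or γ₁ γ₂ ih₁ ih₂ => intro hh; exact hh.imp (ih₁) (ih₂)
  | and γ₁ γ₂ ih₁ ih₂ => intro hh; exact ⟨ih₁ hh.1, ih₂ hh.2⟩
  | loc s => intro hh; exact h hh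
  | le c => exact id
  | lt c => exact id
  | ge c => exact id
  | gt c => exact id
  | reset γ ih => intro hh; exact ih hh

theorem GSat_map (f : S → T) (M : Set (T × ℝ)) :
    ∀ (v : ℝ) (γ : Gamma S),
      GSat M v (γ.map f) ↔ GSat {sw : S × ℝ | (f sw.1, sw.2) ∈ M} v γ := by
  intro v γ
  induction γ generalizing v with
  | top => simp [Gamma.map, GSat]
  | bot => simp [Gamma.map, GSat]
  | or γ₁ γ₂ ih₁ ih₂ => simp [Gamma.map, GSat, ih₁, ih₂]
  | and γ₁ γ₂ ih₁ ih₂ => simp [Gamma.map, GSat, ih₁, ih₂]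
  | loc s => simp [Gamma.map, GSat]
  | le c => simp [Gamma.map, GSat]
  | lt c => simp [Gamma.map, GSat]
  | ge c => simp [Gamma.map, GSat]
  | gt c => simp [Gamma.map, GSat]
  | reset γ ih => simp [Gamma.map, GSat, ih]

theorem GSat_bigOr {M : Set (S × ℝ)} {v : ℝ} {l : List (Gamma S)} :
    GSat M v (bigOr l) ↔ ∃ γ ∈ l, GSat M v γ := by
  induction l with
  | nil => simp [bigOr, GSat]
  | cons γ l ih =>
    show GSat M v (.or γ (bigOr l)) ↔ _
    simp only [GSat, ih, List.mem_cons]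
    constructor
    · rintro (h | ⟨γ', hm, hs⟩); exacts [⟨γ, .inl rfl, h⟩, ⟨γ', .inr hm, hs⟩]
    · rintro ⟨γ', (rfl | hm), hs⟩; exacts [.inl hs, .inr ⟨γ', hm, hs⟩]

theorem GSat_bigAnd {M : Set (S × ℝ)} {v : ℝ} {l : List (Gamma S)} :
    GSat M v (bigAnd l) ↔ ∀ γ ∈ l, GSat M v γ := by
  induction l with
  | nil => simp [bigAnd, GSat]
  | cons γ l ih =>
    show GSat M v (.and γ (bigAnd l)) ↔ _
    simp only [GSat, ih, List.mem_cons]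
    constructor
    · rintro ⟨h₁, h₂⟩ γ' h; rcases h with rfl | hm; exacts [h₁, h₂ γ' hm]
    · intro h; exact ⟨h γ (.inl rfl), fun γ' hm => h γ' (.inr hm)⟩

theorem GSat_toGamma {M : Set (S × ℝ)} {v : ℝ} {I : Ivl} :
    GSat M v (I.toGamma : Gamma S) ↔ I.mem v := by
  unfold Ivl.toGamma Ivl.mem
  constructor
  · rintro ⟨h₁, h₂⟩
    constructor
    · cases hb : I.loStrict <;> simp [hb] at h₁ ⊢ <;> simpa [GSat] using h₁
    · cases hh : I.hi with
      | none => simp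
      | some c => cases hb : I.hiStrict <;> simp [hh, hb] at h₂ ⊢ <;> simpa [GSat] using h₂
  · rintro ⟨h₁, h₂⟩
    constructor
    · cases hb : I.loStrict <;> simp [hb] at h₁ ⊢ <;> simpa [GSat] using h₁
    · cases hh : I.hi with
      | none => simp [GSat]
      | some c => cases hb : I.hiStrict <;> simp [hh, hb] at h₂ ⊢ <;> simpa [GSat] using h₂

theorem GSat_dual_toGamma {M : Set (S × ℝ)} {v : ℝ} {I : Ivl} :
    GSat M v ((I.toGamma : Gamma S).dual) ↔ ¬ I.mem v := by
  unfold Ivl.toGamma Ivl.mem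
  rw [not_and_or]
  constructor
  · rintro (h₁ | h₂)
    · left
      cases hb : I.loStrict <;> simp [hb] at h₁ ⊢ <;> simpa [Gamma.dual, GSat] using h₁
    · right
      cases hh : I.hi with
      | none => simp [hh, Gamma.dual, GSat] at h₂
      | some c =>
        cases hb : I.hiStrict <;> simp [hh, hb] at h₂ ⊢ <;>
          simpa [Gamma.dual, GSat] using h₂
  · rintro (h₁ | h₂)
    · left
      cases hb : I.loStrict <;> simp [hb] at h₁ ⊢ <;> simpa [Gamma.dual, GSat] using h₁
    · right
      cases hh : I.hi with
      | none => simp [hh] at h₂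
      | some c =>
        cases hb : I.hiStrict <;> simp [hh, hb] at h₂ ⊢ <;>
          simpa [Gamma.dual, GSat] using h₂

/-- entry transition formula of `A_φ`. -/
def entG {AP : Type} (φ : NNF AP) : (AP → Bool) → Gamma (locT φ) := (ocataDefs φ).1
/-- internal transition function of `A_φ`. -/
def intG {AP : Type} (φ : NNF AP) : locT φ → (AP → Bool) → Gamma (locT φ) := (ocataDefs φ).2

/-- the NFA-location transition formula used in the `A_I` clause. -/
def stepAG {AP : Type} (n : ℕ) (A : NFAL n) (I : Ivl) (args : Fin n → NNF AP)
    (s : ℕ) (σ : AP → Bool) : Gamma (ℕ ⊕ (Σ a : Fin n, locT (args a))) :=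
  bigOr (List.ofFn fun a : Fin n =>
    .and ((entG (args a) σ).map fun m => Sum.inr ⟨a, m⟩)
         (bigOr ((A.trans s a).map fun s' =>
           if A.final s' then .or (.loc (Sum.inl s')) I.toGamma
           else .loc (Sum.inl s'))))

/-- the NFA-location transition formula used in the `Ã_I` clause. -/
def stepDG {AP : Type} (n : ℕ) (A : NFAL n) (I : Ivl) (args : Fin n → NNF AP)
    (s : ℕ) (σ : AP → Bool) : Gamma (ℕ ⊕ (Σ a : Fin n, locT (args a))) :=
  bigAnd (List.ofFn fun a : Fin n =>
    .or ((entG (args a) σ).map fun m => Sum.inr ⟨a, m⟩)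
        (bigAnd ((A.trans s a).map fun s' =>
          if A.final s' then .and (.loc (Sum.inl s')) (Gamma.dual I.toGamma)
          else .loc (Sum.inl s'))))

section EqLemmas
variable {AP : Type} (σ : AP → Bool)

theorem entG_top : entG (.top : NNF AP) σ = .top := rfl
theorem entG_bot : entG (.bot : NNF AP) σ = .bot := rfl
theorem entG_atom (p : AP) : entG (.atom p) σ = if σ p then .top else .bot := rfl
theorem entG_natom (p : AP) : entG (.natom p) σ = if σ p then .bot else .top := rfl
theorem entG_and (φ ψ : NNF AP) :
    entG (.and φ ψ) σ = .and ((entG φ σ).map Sum.inl) ((entG ψ σ).map Sum.inr) := rfl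
theorem entG_or (φ ψ : NNF AP) :
    entG (.or φ ψ) σ = .or ((entG φ σ).map Sum.inl) ((entG ψ σ).map Sum.inr) := rfl
theorem entG_auto (n : ℕ) (A : NFAL n) (I : Ivl) (args : Fin n → NNF AP) :
    entG (.auto n A I args) σ = .reset (stepAG n A I args A.init σ) := by
  unfold entG stepAG; rw [ocataDefs]; rfl
theorem entG_dauto (n : ℕ) (A : NFAL n) (I : Ivl) (args : Fin n → NNF AP) :
    entG (.dauto n A I args) σ = .reset (stepDG n A I args A.init σ) := by
  unfold entG stepDG; rw [ocataDefs]; rfl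

theorem intG_and_inl (φ ψ : NNF AP) (ℓ : locT φ) :
    intG (.and φ ψ) (Sum.inl ℓ) σ = (intG φ ℓ σ).map Sum.inl := rfl
theorem intG_and_inr (φ ψ : NNF AP) (ℓ : locT ψ) :
    intG (.and φ ψ) (Sum.inr ℓ) σ = (intG ψ ℓ σ).map Sum.inr := rfl
theorem intG_or_inl (φ ψ : NNF AP) (ℓ : locT φ) :
    intG (.or φ ψ) (Sum.inl ℓ) σ = (intG φ ℓ σ).map Sum.inl := rfl
theorem intG_or_inr (φ ψ : NNF AP) (ℓ : locT ψ) :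
    intG (.or φ ψ) (Sum.inr ℓ) σ = (intG ψ ℓ σ).map Sum.inr := rfl
theorem intG_auto_inl (n : ℕ) (A : NFAL n) (I : Ivl) (args : Fin n → NNF AP) (s : ℕ) :
    intG (.auto n A I args) (Sum.inl s) σ = stepAG n A I args s σ := by
  unfold intG stepAG; rw [ocataDefs]; rfl
theorem intG_auto_inr (n : ℕ) (A : NFAL n) (I : Ivl) (args : Fin n → NNF AP)
    (a : Fin n) (m : locT (args a)) :
    intG (.auto n A I args) (Sum.inr ⟨a, m⟩) σ
      = (intG (args a) m σ).map fun m' => Sum.inr ⟨a, m'⟩ := by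
  unfold intG; rw [ocataDefs]; rfl
theorem intG_dauto_inl (n : ℕ) (A : NFAL n) (I : Ivl) (args : Fin n → NNF AP) (s : ℕ) :
    intG (.dauto n A I args) (Sum.inl s) σ = stepDG n A I args s σ := by
  unfold intG stepDG; rw [ocataDefs]; rfl
theorem intG_dauto_inr (n : ℕ) (A : NFAL n) (I : Ivl) (args : Fin n → NNF AP)
    (a : Fin n) (m : locT (args a)) :
    intG (.dauto n A I args) (Sum.inr ⟨a, m⟩) σ
      = (intG (args a) m σ).map fun m' => Sum.inr ⟨a, m'⟩ := by
  unfold intG; rw [ocataDefs]; rfl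

theorem finalP_auto_inl (n : ℕ) (A : NFAL n) (I : Ivl) (args : Fin n → NNF AP) (s : ℕ) :
    finalP (.auto n A I args) (Sum.inl s) = False := by
  rw [finalP]
theorem finalP_auto_inr (n : ℕ) (A : NFAL n) (I : Ivl) (args : Fin n → NNF AP)
    (a : Fin n) (m : locT (args a)) :
    finalP (.auto n A I args) (Sum.inr ⟨a, m⟩) = finalP (args a) m := by
  rw [finalP]
theorem finalP_dauto_inl (n : ℕ) (A : NFAL n) (I : Ivl) (args : Fin n → NNF AP) (s : ℕ) :
    finalP (.dauto n A I args) (Sum.inl s) = True := by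
  rw [finalP]
theorem finalP_dauto_inr (n : ℕ) (A : NFAL n) (I : Ivl) (args : Fin n → NNF AP)
    (a : Fin n) (m : locT (args a)) :
    finalP (.dauto n A I args) (Sum.inr ⟨a, m⟩) = finalP (args a) m := by
  rw [finalP]

end EqLemmas

/-- The entry formula is clock-independent. -/
theorem entG_indep (φ : NNF AP) (σ : AP → Bool) (M : Set (locT φ × ℝ)) (v w : ℝ) :
    GSat M v (entG φ σ) ↔ GSat M w (entG φ σ) := by
  induction φ generalizing v w with
  | top => simp [entG_top, GSat]
  | bot => simp [entG_bot, GSat]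
  | atom p => by_cases h : σ p <;> simp [entG_atom, h, GSat]
  | natom p => by_cases h : σ p <;> simp [entG_natom, h, GSat]
  | and φ ψ ihφ ihψ =>
    rw [entG_and]
    simp only [GSat, GSat_map]
    exact and_congr ((GSat_map _ M v _).trans ((ihφ _ v w).trans (GSat_map _ M w _).symm))
      ((GSat_map _ M v _).trans ((ihψ _ v w).trans (GSat_map _ M w _).symm))
  | or φ ψ ihφ ihψ =>
    rw [entG_or]
    simp only [GSat, GSat_map]
    exact or_congr ((GSat_map _ M v _).trans ((ihφ _ v w).trans (GSat_map _ M w _).symm))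
      ((GSat_map _ M v _).trans ((ihψ _ v w).trans (GSat_map _ M w _).symm))
  | auto n A I args ih => rw [entG_auto]; simp [GSat]
  | dauto n A I args ih => rw [entG_dauto]; simp [GSat]

/-- Consistency of a run fragment with a transition function. -/
def ConsAt (δ : S → α → Gamma S) (ρ : TimedWord α)
    (V : ℕ → Set (S × ℝ)) (E : ℕ → (S × ℝ) → (S × ℝ) → Prop) : Prop :=
  ∀ j sv, sv ∈ V j →
    GSat {t | E j sv t} (sv.2 + delay ρ j) (δ sv.1 (ρ.sym j)) ∧
    ∀ t, E j sv t → t ∈ V (j + 1)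

/-- Büchi acceptance for all paths of a run fragment. -/
def PathsOK (fin : S → Prop) (V : ℕ → Set (S × ℝ))
    (E : ℕ → (S × ℝ) → (S × ℝ) → Prop) : Prop :=
  ∀ (j : ℕ) (p : ℕ → S × ℝ), p 0 ∈ V j → (∀ m, E (j + m) (p m) (p (m + 1))) →
    ∀ N, ∃ m, N ≤ m ∧ fin (p m).1

/-- Localized acceptance: the subautomaton for `φ` entered at position `i` has an
accepting run fragment. -/
def AccF {AP : Type} (φ : NNF AP) (ρ : TimedWord (AP → Bool)) (i : ℕ) : Prop :=
  ∃ (V : ℕ → Set (locT φ × ℝ)) (E : ℕ → (locT φ × ℝ) → (locT φ × ℝ) → Prop),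
    GSat (V (i + 1)) 0 (entG φ (ρ.sym i)) ∧
    ConsAt (intG φ) ρ V E ∧ PathsOK (finalP φ) V E

end Infra
section Infra2

variable {AP : Type} {S T α : Type*}

theorem consAt_empty (δ : S → α → Gamma S) (ρ : TimedWord α) :
    ConsAt δ ρ (fun _ => (∅ : Set (S × ℝ))) (fun _ _ _ => False) := by
  intro j sv h; exact h.elim

theorem pathsOK_empty (fin : S → Prop) :
    PathsOK fin (fun _ => (∅ : Set (S × ℝ))) (fun _ _ _ => False) := by
  intro j p h; exact h.elim

/-- Pushing a run fragment forward along a transition-compatible location map. -/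
def pushV (f : T → S) (V : ℕ → Set (T × ℝ)) : ℕ → Set (S × ℝ) :=
  fun j => (fun sw : T × ℝ => (f sw.1, sw.2)) '' V j

def pushE (f : T → S) (E : ℕ → (T × ℝ) → (T × ℝ) → Prop) :
    ℕ → (S × ℝ) → (S × ℝ) → Prop :=
  fun j sv t => ∃ mw mw', sv = (f mw.1, mw.2) ∧ t = (f mw'.1, mw'.2) ∧ E j mw mw'

theorem prod_map_inj {β : Type*} {f : T → S} (hinj : Function.Injective f)
    {a b : T × β} (h : (f a.1, a.2) = (f b.1, b.2)) : a = b := by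
  obtain ⟨a1, a2⟩ := a; obtain ⟨b1, b2⟩ := b
  simp only [Prod.mk.injEq] at h
  exact Prod.ext (hinj h.1) h.2

theorem push_consAt {δS : S → α → Gamma S} {δT : T → α → Gamma T}
    (f : T → S) (hinj : Function.Injective f)
    (hδ : ∀ t σ, δS (f t) σ = (δT t σ).map f)
    {ρ : TimedWord α} {V : ℕ → Set (T × ℝ)} {E : ℕ → (T × ℝ) → (T × ℝ) → Prop}
    (hc : ConsAt δT ρ V E) :
    ConsAt δS ρ (pushV f V) (pushE f E) := by
  rintro j sv ⟨⟨m, w⟩, hmV, rfl⟩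
  obtain ⟨h1, h2⟩ := hc j (m, w) hmV
  constructor
  · rw [hδ, GSat_map]
    refine GSat_mono ?_ h1
    rintro ⟨m', w'⟩ hE
    exact ⟨(m, w), (m', w'), rfl, rfl, hE⟩
  · rintro t ⟨mw, mw', heq, rfl, hE⟩
    have hmw : mw = (m, w) := by
      exact prod_map_inj hinj (heq.symm : (f mw.1, mw.2) = (f (m,w).1, (m,w).2)).symm ▸ rfl
    subst hmw
    exact ⟨mw', h2 mw' hE, rfl⟩

theorem push_pathsOK {finS : S → Prop} {finT : T → Prop}
    (f : T → S) (hinj : Function.Injective f)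
    (hfin : ∀ t, finS (f t) ↔ finT t)
    {δT : T → α → Gamma T} {ρ : TimedWord α}
    {V : ℕ → Set (T × ℝ)} {E : ℕ → (T × ℝ) → (T × ℝ) → Prop}
    (hc : ConsAt δT ρ V E)
    (hp : PathsOK finT V E) :
    PathsOK finS (pushV f V) (pushE f E) := by
  intro j p hp0 hedge N
  have hform : ∀ m, ∃ mw : T × ℝ, p m = (f mw.1, mw.2) ∧ mw ∈ V (j + m) := by
    intro m
    induction m with
    | zero => obtain ⟨mw, hmw, heq⟩ := hp0; exact ⟨mw, heq.symm, hmw⟩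
    | succ m ih =>
      obtain ⟨mw₀, heq₀, hmem₀⟩ := ih
      obtain ⟨mw, mw', h1, h2, hE⟩ := hedge m
      have hmw : mw = mw₀ := (prod_map_inj hinj (heq₀.symm.trans h1)).symm
      subst hmw
      exact ⟨mw', h2, (hc (j + m) mw hmem₀).2 mw' hE⟩
  choose q hq using hform
  have hedge' : ∀ m, E (j + m) (q m) (q (m + 1)) := by
    intro m
    obtain ⟨mw, mw', h1, h2, hE⟩ := hedge m
    have e1 : q m = mw := prod_map_inj hinj ((hq m).1.symm.trans h1)
    have e2 : q (m + 1) = mw' := prod_map_inj hinj ((hq (m + 1)).1.symm.trans h2)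
    rw [e1, e2]; exact hE
  obtain ⟨m, hm, hfinm⟩ := hp j q (hq 0).2 hedge' N
  refine ⟨m, hm, ?_⟩
  have : (p m).1 = f (q m).1 := congrArg Prod.fst (hq m).1
  rw [this]
  exact (hfin _).mpr hfinm

/-- Pulling a run fragment back along a transition-compatible location map. -/
def pullV (f : T → S) (V : ℕ → Set (S × ℝ)) : ℕ → Set (T × ℝ) :=
  fun j => {mw : T × ℝ | (f mw.1, mw.2) ∈ V j}

def pullE (f : T → S) (E : ℕ → (S × ℝ) → (S × ℝ) → Prop) :
    ℕ → (T × ℝ) → (T × ℝ) → Prop :=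
  fun j mw mw' => E j (f mw.1, mw.2) (f mw'.1, mw'.2)

theorem pull_consAt {δS : S → α → Gamma S} {δT : T → α → Gamma T}
    (f : T → S)
    (hδ : ∀ t σ, δS (f t) σ = (δT t σ).map f)
    {ρ : TimedWord α} {V : ℕ → Set (S × ℝ)} {E : ℕ → (S × ℝ) → (S × ℝ) → Prop}
    (hc : ConsAt δS ρ V E) :
    ConsAt δT ρ (pullV f V) (pullE f E) := by
  rintro j ⟨m, w⟩ hmem
  obtain ⟨h1, h2⟩ := hc j (f m, w) hmem
  rw [hδ, GSat_map] at h1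
  exact ⟨h1, fun t hE => h2 (f t.1, t.2) hE⟩

theorem pull_pathsOK {finS : S → Prop} {finT : T → Prop}
    (f : T → S) (hfin : ∀ t, finS (f t) ↔ finT t)
    {V : ℕ → Set (S × ℝ)} {E : ℕ → (S × ℝ) → (S × ℝ) → Prop}
    (hp : PathsOK finS V E) :
    PathsOK finT (pullV f V) (pullE f E) := by
  intro j p hp0 hedge N
  obtain ⟨m, hm, hfinm⟩ := hp j (fun m => (f (p m).1, (p m).2)) hp0 hedge N
  exact ⟨m, hm, (hfin _).mp hfinm⟩

/-- Union of countably many run fragments, with least-owner edge choice. -/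
theorem union_frag {δ : S → α → Gamma S} {fin : S → Prop} {ρ : TimedWord α}
    (F : ℕ → ((ℕ → Set (S × ℝ)) × (ℕ → (S × ℝ) → (S × ℝ) → Prop)))
    (hc : ∀ k, ConsAt δ ρ (F k).1 (F k).2)
    (hp : ∀ k, PathsOK fin (F k).1 (F k).2) :
    ∃ E, ConsAt δ ρ (fun j => ⋃ k, (F k).1 j) E ∧
      PathsOK fin (fun j => ⋃ k, (F k).1 j) E ∧
      (∀ j sv t, E j sv t → sv ∈ ⋃ k, (F k).1 j ∧ t ∈ ⋃ k, (F k).1 (j + 1)) := by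
  classical
  refine ⟨fun j sv t => ∃ h : (∃ k, sv ∈ (F k).1 j), (F (Nat.find h)).2 j sv t, ?_, ?_, ?_⟩
  · intro j sv hsv
    have h : ∃ k, sv ∈ (F k).1 j := Set.mem_iUnion.mp hsv
    constructor
    · refine GSat_mono ?_ (hc (Nat.find h) j sv (Nat.find_spec h)).1
      intro t ht
      exact ⟨h, ht⟩
    · rintro t ⟨h', ht⟩
      exact Set.mem_iUnion.mpr ⟨Nat.find h', (hc (Nat.find h') j sv (Nat.find_spec h')).2 t ht⟩
  · intro j p hp0 hedge N
    have hex : ∀ m, ∃ k, p m ∈ (F k).1 (j + m) := by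
      intro m
      induction m with
      | zero => exact Set.mem_iUnion.mp hp0
      | succ m _ =>
        obtain ⟨h', ht⟩ := hedge m
        exact ⟨Nat.find h', (hc (Nat.find h') (j + m) (p m) (Nat.find_spec h')).2 _ ht⟩
    set own : ℕ → ℕ := fun m => Nat.find (hex m) with hown
    have hmem : ∀ m, p m ∈ (F (own m)).1 (j + m) := fun m => Nat.find_spec (hex m)
    have hstep : ∀ m, own (m + 1) ≤ own m := by
      intro m
      obtain ⟨h', ht⟩ := hedge m
      have he : h' = hex m := Subsingleton.elim _ _
      subst he
      have : p (m + 1) ∈ (F (own m)).1 (j + m + 1) :=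
        (hc (own m) (j + m) (p m) (hmem m)).2 _ ht
      exact Nat.find_le this
    have hanti' : ∀ a m, own (a + m) ≤ own a := by
      intro a m
      induction m with
      | zero => exact le_rfl
      | succ m ih => exact le_trans (hstep (a + m)) ih
    have hanti : ∀ a b, a ≤ b → own b ≤ own a := by
      intro a b hab
      have : b = a + (b - a) := by omega
      rw [this]; exact hanti' a (b - a)
    obtain ⟨m₀, hm₀⟩ : ∃ m₀, own m₀ = sInf (Set.range own) :=
      Nat.sInf_mem (Set.range_nonempty own)
    have hconst : ∀ m, m₀ ≤ m → own m = own m₀ := by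
      intro m hm
      refine le_antisymm ?_ ?_
      · exact hanti m₀ m hm
      · rw [hm₀]; exact Nat.sInf_le (Set.mem_range_self m)
    have hedge' : ∀ m, (F (own m₀)).2 (j + m₀ + m) (p (m₀ + m)) (p (m₀ + m + 1)) := by
      intro m
      obtain ⟨h', ht⟩ := hedge (m₀ + m)
      have he : h' = hex (m₀ + m) := Subsingleton.elim _ _
      subst he
      have e : own (m₀ + m) = own m₀ := hconst _ (Nat.le_add_right _ _)
      rw [show j + m₀ + m = j + (m₀ + m) by omega]
      rw [← e]
      exact ht
    obtain ⟨m, hm, hfinm⟩ :=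
      hp (own m₀) (j + m₀) (fun m => p (m₀ + m)) (hmem m₀) hedge' N
    exact ⟨m₀ + m, by omega, hfinm⟩
  · rintro j sv t ⟨h', ht⟩
    refine ⟨Set.mem_iUnion.mpr ⟨Nat.find h', Nat.find_spec h'⟩, ?_⟩
    exact Set.mem_iUnion.mpr ⟨Nat.find h', (hc (Nat.find h') j sv (Nat.find_spec h')).2 t ht⟩

end Infra2
section Infra3

variable {AP : Type} {S T α : Type*}

theorem delay_succ (ρ : TimedWord α) (j : ℕ) :
    delay ρ (j + 1) = ρ.tm (j + 1) - ρ.tm j := by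
  simp [delay, prevT]

theorem delay_zero (ρ : TimedWord α) : delay ρ 0 = ρ.tm 0 := by
  simp [delay, prevT]

theorem wordOf_single (a : ℕ → α) (j : ℕ) : wordOf a j j = [a j] := by
  show List.map (fun k => a (j + k)) (List.range (j+1-j)) = [a j]
  rw [show j + 1 - j = 1 by omega, List.range_succ, List.range_zero]
  simp

theorem wordOf_cons {a : ℕ → α} {i j : ℕ} (h : i ≤ j) :
    wordOf a i j = a i :: wordOf a (i + 1) j := by
  unfold wordOf
  rw [show j + 1 - i = (j - i) + 1 by omega, List.range_succ_eq_map]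
  simp only [List.map_cons, List.map_map, Function.comp]
  rw [show j + 1 - (i + 1) = j - i by omega]
  refine List.cons_eq_cons.mpr ⟨by simp, ?_⟩
  apply List.map_congr_left
  intro k _
  show a (i + (k + 1)) = a (i + 1 + k)
  congr 1
  omega

theorem wordOf_snoc {a : ℕ → α} {i j : ℕ} (h : i ≤ j + 1) :
    wordOf a i (j + 1) = wordOf a i j ++ [a (j + 1)] := by
  unfold wordOf
  rw [show j + 1 + 1 - i = (j + 1 - i) + 1 by omega, List.range_succ]
  rw [List.map_append]
  simp only [List.map_cons, List.map_nil]
  rw [show i + (j + 1 - i) = j + 1 by omega]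

theorem wordOf_congr {a b : ℕ → α} {i j : ℕ}
    (h : ∀ k, i ≤ k → k ≤ j → a k = b k) : wordOf a i j = wordOf b i j := by
  unfold wordOf
  apply List.map_congr_left
  intro k hk
  simp only [List.mem_range] at hk
  exact h (i + k) (Nat.le_add_right _ _) (by omega)

theorem wordOf_ne_nil {a : ℕ → α} {i j : ℕ} (h : i ≤ j) : wordOf a i j ≠ [] := by
  unfold wordOf
  simp only [ne_eq, List.map_eq_nil_iff, List.range_eq_nil]
  omega

theorem NFAL.RunOn_snoc {n : ℕ} (A : NFAL n) (q q' : ℕ) (w : List (Fin n)) (x : Fin n) :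
    A.RunOn q (w ++ [x]) q' ↔ ∃ q'', A.RunOn q w q'' ∧ q' ∈ A.trans q'' x := by
  induction w generalizing q with
  | nil =>
    simp only [List.nil_append, NFAL.RunOn]
    constructor
    · rintro ⟨q'', hq'', rfl⟩; exact ⟨q, rfl, hq''⟩
    · rintro ⟨q'', rfl, h⟩; exact ⟨q', h, rfl⟩
  | cons y w ih =>
    simp only [List.cons_append, NFAL.RunOn]
    constructor
    · rintro ⟨q₁, hq₁, hrun⟩
      obtain ⟨q'', h1, h2⟩ := (ih q₁).mp hrun
      exact ⟨q'', ⟨q₁, hq₁, h1⟩, h2⟩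
    · rintro ⟨q'', ⟨q₁, hq₁, h1⟩, h2⟩
      exact ⟨q₁, hq₁, (ih q₁).mpr ⟨q'', h1, h2⟩⟩

/-- Pull an accepting fragment of a compound automaton back to a component. -/
theorem pull_accF {φb φs : NNF AP} (f : locT φs → locT φb)
    (hδ : ∀ m σ, intG φb (f m) σ = (intG φs m σ).map f)
    (hfin : ∀ m, finalP φb (f m) ↔ finalP φs m)
    {ρ : TimedWord (AP → Bool)} {V : ℕ → Set (locT φb × ℝ)}
    {E : ℕ → (locT φb × ℝ) → (locT φb × ℝ) → Prop} {i : ℕ}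
    {M : Set (locT φb × ℝ)} {v : ℝ}
    (hc : ConsAt (intG φb) ρ V E) (hp : PathsOK (finalP φb) V E)
    (hM : M ⊆ V (i + 1)) (he : GSat M v ((entG φs (ρ.sym i)).map f)) :
    AccF φs ρ i := by
  refine ⟨pullV f V, pullE f E, ?_, pull_consAt f hδ hc, pull_pathsOK f hfin hp⟩
  rw [GSat_map] at he
  have h2 : GSat (pullV f V (i + 1)) v (entG φs (ρ.sym i)) :=
    GSat_mono (M := {sw : locT φs × ℝ | (f sw.1, sw.2) ∈ M}) (M' := pullV f V (i + 1))
      (fun t ht => hM ht) he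
  exact (entG_indep _ _ _ 0 v).mpr h2

/-- Entry formula transported to a pushed fragment. -/
theorem push_entry {φb φs : NNF AP} (f : locT φs → locT φb)
    {σ : AP → Bool} (V : ℕ → Set (locT φs × ℝ)) (j : ℕ) {v : ℝ}
    (he : GSat (V j) v (entG φs σ)) :
    GSat (pushV f V j) v ((entG φs σ).map f) := by
  rw [GSat_map]
  refine GSat_mono ?_ he
  intro t ht
  exact ⟨t, ht, rfl⟩

theorem entG_map_indep {φs : NNF AP} {T' : Type*} (f : locT φs → T') (σ : AP → Bool)
    (M : Set (T' × ℝ)) (v w : ℝ) :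
    GSat M v ((entG φs σ).map f) ↔ GSat M w ((entG φs σ).map f) := by
  rw [GSat_map, GSat_map]
  exact entG_indep _ _ _ v w

theorem tm_clock {α : Type*} (ρ : TimedWord α) (i j : ℕ) (hj : 1 ≤ j) :
    ρ.tm (j - 1) - ρ.tm i + delay ρ j = ρ.tm j - ρ.tm i := by
  obtain ⟨k, rfl⟩ : ∃ k, j = k + 1 := ⟨j - 1, by omega⟩
  rw [delay_succ]
  simp only [Nat.add_sub_cancel]
  ring

end Infra3
theorem auto_fwd {AP : Type} {n : ℕ} {A : NFAL n} {I : Ivl} {args : Fin n → NNF AP}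
    {ρ : TimedWord (AP → Bool)} {i : ℕ}
    (ih : ∀ (a : Fin n) (ℓ : ℕ), AccF (args a) ρ ℓ ↔ NNF.sat ρ ℓ (args a))
    (hsat : AutoWitL A ρ.tm (fun ℓ a => NNF.sat ρ ℓ (args a)) I i) :
    AccF (.auto n A I args) ρ i := by
  classical
  obtain ⟨jend, hij, hImem, a, ⟨hne, qf, hqf, hrun⟩, hsats⟩ := hsat
  have comp : ∀ ℓ : ℕ, ∃ (W : ℕ → Set (locT (args (a ℓ)) × ℝ))
      (EE : ℕ → (locT (args (a ℓ)) × ℝ) → (locT (args (a ℓ)) × ℝ) → Prop),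
      (i ≤ ℓ → ℓ ≤ jend → GSat (W (ℓ + 1)) 0 (entG (args (a ℓ)) (ρ.sym ℓ))) ∧
      ConsAt (intG (args (a ℓ))) ρ W EE ∧ PathsOK (finalP (args (a ℓ))) W EE := by
    intro ℓ
    by_cases h : i ≤ ℓ ∧ ℓ ≤ jend
    · obtain ⟨W, EE, he, hc, hp⟩ := (ih (a ℓ) ℓ).mpr (hsats ℓ h.1 h.2)
      exact ⟨W, EE, fun _ _ => he, hc, hp⟩
    · exact ⟨fun _ => ∅, fun _ _ _ => False,
        fun h1 h2 => absurd ⟨h1, h2⟩ h, consAt_empty _ _, pathsOK_empty _⟩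
  choose W EE hent hcon hpat using comp
  let inj : ∀ ℓ : ℕ, locT (args (a ℓ)) → locT (NNF.auto n A I args) :=
    fun ℓ m => Sum.inr ⟨a ℓ, m⟩
  have hinj : ∀ ℓ, Function.Injective (inj ℓ) := by
    intro ℓ x y h
    have h2 : (⟨a ℓ, x⟩ : Σ b : Fin n, locT (args b)) = ⟨a ℓ, y⟩ := by
      injection h
    injection h2 with h3 h4
  have hδc : ∀ (ℓ : ℕ) (m : locT (args (a ℓ))) (σ : AP → Bool),
      intG (NNF.auto n A I args) (inj ℓ m) σ = (intG (args (a ℓ)) m σ).map (inj ℓ) :=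
    fun ℓ m σ => intG_auto_inr σ n A I args (a ℓ) m
  have hfinc : ∀ (ℓ : ℕ) (m : locT (args (a ℓ))),
      finalP (NNF.auto n A I args) (inj ℓ m) ↔ finalP (args (a ℓ)) m := by
    intro ℓ m
    rw [show inj ℓ m = Sum.inr ⟨a ℓ, m⟩ from rfl, finalP_auto_inr]
  let F : ℕ → ((ℕ → Set (locT (NNF.auto n A I args) × ℝ)) ×
      (ℕ → (locT (NNF.auto n A I args) × ℝ) → (locT (NNF.auto n A I args) × ℝ) → Prop)) :=
    fun ℓ => (pushV (inj ℓ) (W ℓ), pushE (inj ℓ) (EE ℓ))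
  obtain ⟨Eu, hcu, hpu, hedom⟩ := union_frag F
    (fun ℓ => push_consAt (inj ℓ) (hinj ℓ) (hδc ℓ) (hcon ℓ))
    (fun ℓ => push_pathsOK (inj ℓ) (hinj ℓ) (hfinc ℓ) (hcon ℓ) (hpat ℓ))
  let Vu : ℕ → Set (locT (NNF.auto n A I args) × ℝ) := fun j => ⋃ ℓ, (F ℓ).1 j
  let Vchain : ℕ → Set (locT (NNF.auto n A I args) × ℝ) := fun j =>
    {sv | ∃ q : ℕ, sv = (Sum.inl q, ρ.tm (j - 1) - ρ.tm i) ∧ i + 1 ≤ j ∧ j ≤ jend ∧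
      A.RunOn q (wordOf a j jend) qf}
  let VV : ℕ → Set (locT (NNF.auto n A I args) × ℝ) := fun j => Vchain j ∪ Vu j
  let EB : ℕ → (locT (NNF.auto n A I args) × ℝ) → (locT (NNF.auto n A I args) × ℝ) → Prop :=
    fun j sv t =>
      ((∃ q : ℕ, sv.1 = Sum.inl q) ∧ t ∈ VV (j + 1)) ∨
      ((∃ x, sv.1 = Sum.inr x) ∧ Eu j sv t)
  have hVuInr : ∀ j sv, sv ∈ Vu j → ∃ x, sv.1 = Sum.inr x := by
    intro j sv h
    obtain ⟨ℓ, hℓ⟩ := Set.mem_iUnion.mp h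
    obtain ⟨mw, -, rfl⟩ := hℓ
    exact ⟨_, rfl⟩
  have hstep : ∀ (j : ℕ) (q : ℕ), i ≤ j → j ≤ jend → A.RunOn q (wordOf a j jend) qf →
      GSat (VV (j + 1)) (ρ.tm j - ρ.tm i) (stepAG n A I args q (ρ.sym j)) := by
    intro j q hij' hjend hrunq
    unfold stepAG
    refine GSat_bigOr.mpr ⟨_, List.mem_ofFn.mpr ⟨a j, rfl⟩, ?_, ?_⟩
    · -- entry conjunct
      have h1 := push_entry (inj j) (W j) (j + 1) (hent j hij' hjend)
      have h2 : GSat (Vu (j + 1)) 0 ((entG (args (a j)) (ρ.sym j)).map (inj j)) :=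
        GSat_mono (fun t ht => Set.mem_iUnion.mpr ⟨j, ht⟩) h1
      have h3 : GSat (VV (j + 1)) 0 ((entG (args (a j)) (ρ.sym j)).map (inj j)) :=
        GSat_mono (fun t ht => Or.inr ht) h2
      exact (entG_map_indep _ _ _ _ _).mpr h3
    · -- successor conjunct
      rcases eq_or_lt_of_le hjend with rfl | hlt
      · rw [wordOf_single] at hrunq
        obtain ⟨q', hq'mem, hq'⟩ := hrunq
        have hq'' : q' = qf := hq'
        subst hq''
        refine GSat_bigOr.mpr ⟨_, List.mem_map.mpr ⟨q', hq'mem, rfl⟩, ?_⟩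
        rw [if_pos hqf]
        exact Or.inr (GSat_toGamma.mpr hImem)
      · rw [wordOf_cons (by omega : j ≤ jend)] at hrunq
        obtain ⟨q1, hq1mem, hq1run⟩ := hrunq
        refine GSat_bigOr.mpr ⟨_, List.mem_map.mpr ⟨q1, hq1mem, rfl⟩, ?_⟩
        have hloc : ((Sum.inl q1 : locT (NNF.auto n A I args)), ρ.tm j - ρ.tm i) ∈ VV (j + 1) :=
          Or.inl ⟨q1, rfl, by omega, by omega, hq1run⟩
        by_cases hf : A.final q1 = true
        · rw [if_pos hf]
          exact Or.inl hloc
        · rw [if_neg hf]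
          exact hloc
  refine ⟨VV, EB, ?_, ?_, ?_⟩
  · rw [entG_auto]
    show GSat (VV (i + 1)) (0 : ℝ) (stepAG n A I args A.init (ρ.sym i))
    have h := hstep i A.init le_rfl hij hrun
    rwa [sub_self] at h
  · intro j sv hsv
    rcases hsv with hch | hu
    · obtain ⟨q, rfl, hj1, hj2, hrunq⟩ := hch
      constructor
      · rw [intG_auto_inl]
        show GSat {t | EB j (Sum.inl q, ρ.tm (j - 1) - ρ.tm i) t}
          (ρ.tm (j - 1) - ρ.tm i + delay ρ j) (stepAG n A I args q (ρ.sym j))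
        rw [tm_clock ρ i j (by omega)]
        refine GSat_mono ?_ (hstep j q (by omega) hj2 hrunq)
        intro t ht
        exact Or.inl ⟨⟨q, rfl⟩, ht⟩
      · rintro t (⟨-, hmem⟩ | ⟨⟨x, habs⟩, -⟩)
        · exact hmem
        · exact absurd habs (by simp)
    · have h1 := hcu j sv hu
      constructor
      · refine GSat_mono ?_ h1.1
        intro t ht
        exact Or.inr ⟨hVuInr j sv hu, ht⟩
      · rintro t (⟨⟨q, habs⟩, -⟩ | ⟨-, hEu⟩)
        · obtain ⟨x, hx⟩ := hVuInr j sv hu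
          rw [hx] at habs
          exact absurd habs (by simp)
        · exact Or.inr (h1.2 t hEu)
  · intro j p hp0 hedge N
    have hmemV : ∀ m, p m ∈ VV (j + m) := by
      intro m
      induction m with
      | zero => exact hp0
      | succ m ih' =>
        rcases hedge m with ⟨-, hmem⟩ | ⟨-, hEu⟩
        · exact hmem
        · exact Or.inr (hedom _ _ _ hEu).2
    have htail : ∀ m, p (jend + 1 + m) ∈ Vu (j + (jend + 1 + m)) := by
      intro m
      rcases hmemV (jend + 1 + m) with hch | hu
      · obtain ⟨q, -, -, hj2, -⟩ := hch
        omega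
      · exact hu
    have hEtail : ∀ m, Eu (j + (jend + 1) + m) (p (jend + 1 + m)) (p (jend + 1 + m + 1)) := by
      intro m
      rcases hedge (jend + 1 + m) with ⟨⟨q, hq⟩, -⟩ | ⟨-, hEu⟩
      · obtain ⟨x, hx⟩ := hVuInr _ _ (htail m)
        rw [hx] at hq
        exact absurd hq (by simp)
      · rw [show j + (jend + 1) + m = j + (jend + 1 + m) from by omega]
        exact hEu
    obtain ⟨m, hm, hfinm⟩ := hpu (j + (jend + 1)) (fun m => p (jend + 1 + m))
      (by
        have h0 := htail 0
        rwa [show j + (jend + 1 + 0) = j + (jend + 1) from by omega] at h0) hEtail N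
    exact ⟨jend + 1 + m, by omega, hfinm⟩
theorem auto_bwd {AP : Type} {n : ℕ} {A : NFAL n} {I : Ivl} {args : Fin n → NNF AP}
    {ρ : TimedWord (AP → Bool)} {i : ℕ}
    (ih : ∀ (a : Fin n) (ℓ : ℕ), AccF (args a) ρ ℓ ↔ NNF.sat ρ ℓ (args a))
    (hacc : AccF (.auto n A I args) ρ i) :
    AutoWitL A ρ.tm (fun ℓ a => NNF.sat ρ ℓ (args a)) I i := by
  classical
  obtain ⟨V, E, he, hc, hp⟩ := hacc
  by_contra hno
  -- analysis of a satisfied stepAG formula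
  have hanalyze : ∀ (ℓ q : ℕ) (M : Set (locT (NNF.auto n A I args) × ℝ)),
      i ≤ ℓ → M ⊆ V (ℓ + 1) →
      GSat M (ρ.tm ℓ - ρ.tm i) (stepAG n A I args q (ρ.sym ℓ)) →
      ∃ a' : Fin n, NNF.sat ρ ℓ (args a') ∧ ∃ q', q' ∈ A.trans q a' ∧
        (((Sum.inl q' : locT (NNF.auto n A I args)), ρ.tm ℓ - ρ.tm i) ∈ M ∨
          (A.final q' = true ∧ I.mem (ρ.tm ℓ - ρ.tm i))) := by
    intro ℓ q M hiℓ hM hg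
    unfold stepAG at hg
    obtain ⟨γ, hγmem, hγ⟩ := GSat_bigOr.mp hg
    obtain ⟨a', rfl⟩ := List.mem_ofFn.mp hγmem
    obtain ⟨hent', hsucc⟩ := hγ
    have hsat' : NNF.sat ρ ℓ (args a') :=
      (ih a' ℓ).mp (pull_accF (φb := NNF.auto n A I args) (fun m => Sum.inr ⟨a', m⟩)
        (fun m σ => intG_auto_inr σ n A I args a' m)
        (fun m => by rw [finalP_auto_inr]) hc hp hM hent')
    refine ⟨a', hsat', ?_⟩
    obtain ⟨γ2, hmem2, hγ2⟩ := GSat_bigOr.mp hsucc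
    obtain ⟨q', hq'mem, rfl⟩ := List.mem_map.mp hmem2
    refine ⟨q', hq'mem, ?_⟩
    by_cases hf : A.final q' = true
    · rw [if_pos hf] at hγ2
      rcases hγ2 with hloc | htg
      · exact Or.inl hloc
      · exact Or.inr ⟨hf, GSat_toGamma.mp htg⟩
    · rw [if_neg hf] at hγ2
      exact Or.inl hγ2
  -- run extension
  have hext : ∀ (ℓ q q' : ℕ) (b : ℕ → Fin n) (a' : Fin n), i + 1 ≤ ℓ →
      A.RunOn A.init (wordOf b i (ℓ - 1)) q → q' ∈ A.trans q a' →
      A.RunOn A.init (wordOf (fun k => if k = ℓ then a' else b k) i ℓ) q' := by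
    intro ℓ q q' b a' hℓ hrun' hmem
    obtain ⟨u, rfl⟩ : ∃ u, ℓ = u + 1 := ⟨ℓ - 1, by omega⟩
    rw [wordOf_snoc (by omega), NFAL.RunOn_snoc]
    have hcongr : wordOf (fun k => if k = u + 1 then a' else b k) i u = wordOf b i u :=
      wordOf_congr (fun k h1 h2 => by simp [show k ≠ u + 1 by omega])
    rw [hcongr]
    exact ⟨q, hrun', by simp [hmem]⟩
  -- the chain invariant
  let P : ℕ → (locT (NNF.auto n A I args) × ℝ) → Prop := fun ℓ sv =>
    sv ∈ V ℓ ∧ ∃ q : ℕ, sv.1 = Sum.inl q ∧ sv.2 = ρ.tm (ℓ - 1) - ρ.tm i ∧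
      ∃ b : ℕ → Fin n, A.RunOn A.init (wordOf b i (ℓ - 1)) q ∧
        ∀ k, i ≤ k → k ≤ ℓ - 1 → NNF.sat ρ k (args (b k))
  -- base: some vertex at level i+1
  have hbase : ∃ t, P (i + 1) t := by
    rw [entG_auto] at he
    have he' : GSat (V (i + 1)) (0 : ℝ) (stepAG n A I args A.init (ρ.sym i)) := he
    rw [show (0 : ℝ) = ρ.tm i - ρ.tm i from (sub_self _).symm] at he'
    obtain ⟨a', hsat', q', hq'mem, hcase⟩ :=
      hanalyze i A.init (V (i + 1)) le_rfl subset_rfl he'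
    rcases hcase with hmem | ⟨hfq, hIm⟩
    · refine ⟨(Sum.inl q', ρ.tm i - ρ.tm i), ⟨hmem, q', rfl, by simp, ?_⟩⟩
      refine ⟨fun _ => a', ?_, ?_⟩
      · show A.RunOn A.init (wordOf (fun _ => a') i i) q'
        rw [wordOf_single]
        exact ⟨q', hq'mem, rfl⟩
      · intro k h1 h2
        have : k = i := by omega
        subst this
        exact hsat'
    · exact absurd ⟨i, le_rfl, hIm, fun _ => a',
        ⟨wordOf_ne_nil le_rfl, q', hfq, by rw [wordOf_single]; exact ⟨q', hq'mem, rfl⟩⟩,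
        fun k h1 h2 => by
          have hk : k = i := by omega
          rw [hk]; exact hsat'⟩ hno
  -- step
  have hkey : ∀ ℓ sv, i + 1 ≤ ℓ → P ℓ sv → ∃ t, E ℓ sv t ∧ P (ℓ + 1) t := by
    intro ℓ sv hℓ hP
    obtain ⟨hmem, q, hq1, hq2, b, hbrun, hbsat⟩ := hP
    obtain ⟨sv1, sv2⟩ := sv
    simp only at hq1 hq2
    subst hq1
    subst hq2
    have hg := (hc ℓ _ hmem).1
    rw [intG_auto_inl] at hg
    have hval : ρ.tm (ℓ - 1) - ρ.tm i + delay ρ ℓ = ρ.tm ℓ - ρ.tm i :=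
      tm_clock ρ i ℓ (by omega)
    rw [show ((Sum.inl q : locT (NNF.auto n A I args)), ρ.tm (ℓ - 1) - ρ.tm i).2 + delay ρ ℓ
        = ρ.tm ℓ - ρ.tm i from hval] at hg
    obtain ⟨a', hsat', q', hq'mem, hcase⟩ :=
      hanalyze ℓ q {t | E ℓ (Sum.inl q, ρ.tm (ℓ - 1) - ρ.tm i) t} (by omega)
        (fun t ht => (hc ℓ _ hmem).2 t ht) hg
    have hrun' := hext ℓ q q' b a' hℓ hbrun hq'mem
    have hsatall : ∀ k, i ≤ k → k ≤ ℓ →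
        NNF.sat ρ k (args ((fun k => if k = ℓ then a' else b k) k)) := by
      intro k h1 h2
      by_cases hk : k = ℓ
      · subst hk; simpa using hsat'
      · have := hbsat k h1 (by omega)
        simpa [hk] using this
    rcases hcase with hmemE | ⟨hfq, hIm⟩
    · refine ⟨(Sum.inl q', ρ.tm ℓ - ρ.tm i), hmemE, ?_⟩
      refine ⟨(hc ℓ _ hmem).2 _ hmemE, q', rfl, by simp, ?_⟩
      exact ⟨fun k => if k = ℓ then a' else b k, hrun', hsatall⟩
    · exact absurd ⟨ℓ, by omega, hIm, fun k => if k = ℓ then a' else b k,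
        ⟨wordOf_ne_nil (by omega), q', hfq, hrun'⟩, hsatall⟩ hno
  -- build the infinite inl-chain, contradicting acceptance
  obtain ⟨t₀, hP₀⟩ := hbase
  have step : ∀ m (sv : {sv // P (i + 1 + m) sv}),
      ∃ t : {t // P (i + 1 + (m + 1)) t}, E (i + 1 + m) sv.1 t.1 := by
    rintro m ⟨sv, hsv⟩
    obtain ⟨t, hE, hPt⟩ := hkey (i + 1 + m) sv (by omega) hsv
    exact ⟨⟨t, hPt⟩, hE⟩
  choose f hf using step
  let g : ∀ m : ℕ, {sv // P (i + 1 + m) sv} :=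
    fun m => Nat.rec ⟨t₀, hP₀⟩ (fun m prev => f m prev) m
  have hedges : ∀ m, E (i + 1 + m) (g m).1 (g (m + 1)).1 := fun m => hf m (g m)
  obtain ⟨m, -, hfinm⟩ := hp (i + 1) (fun m => (g m).1) (g 0).2.1 hedges 0
  obtain ⟨-, q, hq1, -⟩ := (g m).2
  rw [hq1] at hfinm
  rw [finalP_auto_inl] at hfinm
  exact hfinm
theorem dauto_bwd {AP : Type} {n : ℕ} {A : NFAL n} {I : Ivl} {args : Fin n → NNF AP}
    {ρ : TimedWord (AP → Bool)} {i : ℕ}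
    (ih : ∀ (a : Fin n) (ℓ : ℕ), AccF (args a) ρ ℓ ↔ NNF.sat ρ ℓ (args a))
    (hacc : AccF (.dauto n A I args) ρ i) :
    ¬ AutoWitL A ρ.tm (fun ℓ a => ¬ NNF.sat ρ ℓ (args a)) I i := by
  classical
  obtain ⟨V, E, he, hc, hp⟩ := hacc
  rintro ⟨jend, hij, hIm, a, ⟨hne, qf, hqf, hrun⟩, hnsat⟩
  have hanalyze : ∀ (ℓ q : ℕ) (M : Set (locT (NNF.dauto n A I args) × ℝ)),
      i ≤ ℓ → ℓ ≤ jend → M ⊆ V (ℓ + 1) →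
      GSat M (ρ.tm ℓ - ρ.tm i) (stepDG n A I args q (ρ.sym ℓ)) →
      ∀ q', q' ∈ A.trans q (a ℓ) →
        (((Sum.inl q' : locT (NNF.dauto n A I args)), ρ.tm ℓ - ρ.tm i) ∈ M ∧
          (A.final q' = true → ¬ I.mem (ρ.tm ℓ - ρ.tm i))) := by
    intro ℓ q M h1 h2 hM hg q' hq'mem
    unfold stepDG at hg
    have hγ := GSat_bigAnd.mp hg _ (List.mem_ofFn.mpr ⟨a ℓ, rfl⟩)
    rcases hγ with hent' | hsucc
    · exact absurd ((ih (a ℓ) ℓ).mp (pull_accF (φb := NNF.dauto n A I args) (fun m => Sum.inr ⟨a ℓ, m⟩)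
        (fun m σ => intG_dauto_inr σ n A I args (a ℓ) m)
        (fun m => by rw [finalP_dauto_inr]) hc hp hM hent')) (hnsat ℓ h1 h2)
    · have hγ2 := GSat_bigAnd.mp hsucc _ (List.mem_map.mpr ⟨q', hq'mem, rfl⟩)
      by_cases hf : A.final q' = true
      · rw [if_pos hf] at hγ2
        exact ⟨hγ2.1, fun _ => GSat_dual_toGamma.mp hγ2.2⟩
      · rw [if_neg hf] at hγ2
        exact ⟨hγ2, fun hff => absurd hff hf⟩
  have climb : ∀ d ℓ q, jend - ℓ = d → i + 1 ≤ ℓ → ℓ ≤ jend →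
      ((Sum.inl q : locT (NNF.dauto n A I args)), ρ.tm (ℓ - 1) - ρ.tm i) ∈ V ℓ →
      A.RunOn q (wordOf a ℓ jend) qf → False := by
    intro d
    induction d with
    | zero =>
      intro ℓ q hd h1 h2 hmem hrunq
      have hℓ : ℓ = jend := by omega
      subst hℓ
      rw [wordOf_single] at hrunq
      obtain ⟨q', hq'mem, hq'⟩ := hrunq
      have hq'' : q' = qf := hq'
      subst hq''
      have hg := (hc ℓ _ hmem).1
      rw [intG_dauto_inl] at hg
      rw [show ((Sum.inl q : locT (NNF.dauto n A I args)), ρ.tm (ℓ - 1) - ρ.tm i).2 + delay ρ ℓ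
          = ρ.tm ℓ - ρ.tm i from tm_clock ρ i ℓ (by omega)] at hg
      obtain ⟨-, hnI⟩ := hanalyze ℓ q _ (by omega) le_rfl
        (fun t ht => (hc ℓ _ hmem).2 t ht) hg q' hq'mem
      exact hnI hqf hIm
    | succ d ihd =>
      intro ℓ q hd h1 h2 hmem hrunq
      rw [wordOf_cons (show ℓ ≤ jend by omega)] at hrunq
      obtain ⟨q1, hq1mem, hq1run⟩ := hrunq
      have hg := (hc ℓ _ hmem).1
      rw [intG_dauto_inl] at hg
      rw [show ((Sum.inl q : locT (NNF.dauto n A I args)), ρ.tm (ℓ - 1) - ρ.tm i).2 + delay ρ ℓ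
          = ρ.tm ℓ - ρ.tm i from tm_clock ρ i ℓ (by omega)] at hg
      obtain ⟨hmm, -⟩ := hanalyze ℓ q _ (by omega) (by omega)
        (fun t ht => (hc ℓ _ hmem).2 t ht) hg q1 hq1mem
      exact ihd (ℓ + 1) q1 (by omega) (by omega) (by omega)
        ((hc ℓ _ hmem).2 _ hmm) hq1run
  -- entry analysis
  rw [entG_dauto] at he
  have he' : GSat (V (i + 1)) (0 : ℝ) (stepDG n A I args A.init (ρ.sym i)) := he
  rw [show (0 : ℝ) = ρ.tm i - ρ.tm i from (sub_self _).symm] at he'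
  rcases eq_or_lt_of_le hij with rfl | hlt
  · rw [wordOf_single] at hrun
    obtain ⟨q', hq'mem, hq'⟩ := hrun
    have hq'' : q' = qf := hq'
    subst hq''
    obtain ⟨-, hnI⟩ := hanalyze i A.init (V (i + 1)) le_rfl le_rfl subset_rfl he' q' hq'mem
    exact hnI hqf hIm
  · rw [wordOf_cons (le_of_lt hlt)] at hrun
    obtain ⟨q1, hq1mem, hq1run⟩ := hrun
    obtain ⟨hmm, -⟩ := hanalyze i A.init (V (i + 1)) le_rfl (by omega) subset_rfl he' q1 hq1mem
    exact climb (jend - (i + 1)) (i + 1) q1 rfl le_rfl (by omega) hmm hq1run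
theorem dauto_fwd {AP : Type} {n : ℕ} {A : NFAL n} {I : Ivl} {args : Fin n → NNF AP}
    {ρ : TimedWord (AP → Bool)} {i : ℕ}
    (ih : ∀ (a : Fin n) (ℓ : ℕ), AccF (args a) ρ ℓ ↔ NNF.sat ρ ℓ (args a))
    (hno : ¬ AutoWitL A ρ.tm (fun ℓ a => ¬ NNF.sat ρ ℓ (args a)) I i) :
    AccF (.dauto n A I args) ρ i := by
  classical
  rcases Nat.eq_zero_or_pos n with rfl | hn
  · -- no letters: the transition formula is the empty conjunction
    refine ⟨fun _ => ∅, fun _ _ _ => False, ?_, consAt_empty _ _, pathsOK_empty _⟩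
    rw [entG_dauto]
    have htop : stepDG 0 A I args A.init (ρ.sym i) = bigAnd [] := by
      unfold stepDG
      rw [List.ofFn_zero]
    rw [htop]
    trivial
  -- reachability by words of unsatisfied letters
  let Rch : ℕ → ℕ → Prop := fun k =>
    Nat.rec (fun q => q = A.init)
      (fun k' rch q' => ∃ q a', rch q ∧ q' ∈ A.trans q a' ∧
        ¬ NNF.sat ρ (i + k') (args a')) k
  have hword : ∀ k, 1 ≤ k → ∀ q, Rch k q →
      ∃ b : ℕ → Fin n, A.RunOn A.init (wordOf b i (i + k - 1)) q ∧
        ∀ m, i ≤ m → m ≤ i + k - 1 → ¬ NNF.sat ρ m (args (b m)) := by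
    intro k
    induction k with
    | zero => omega
    | succ u ihu =>
      intro _ q hr
      obtain ⟨q₀, a', hr₀, hmem, hns⟩ := hr
      rcases Nat.eq_zero_or_pos u with rfl | hu
      · have hq₀ : q₀ = A.init := hr₀
        subst hq₀
        refine ⟨fun _ => a', ?_, ?_⟩
        · show A.RunOn A.init (wordOf (fun _ => a') i (i + 1 - 1)) q
          rw [show i + 1 - 1 = i from rfl, wordOf_single]
          exact ⟨q, hmem, rfl⟩
        · intro m h1 h2
          have : m = i := by omega
          subst this
          simpa using hns
      · obtain ⟨b₀, hbrun, hbsat⟩ := ihu hu q₀ hr₀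
        refine ⟨fun m => if m = i + u then a' else b₀ m, ?_, ?_⟩
        · rw [show i + (u + 1) - 1 = (i + u - 1) + 1 from by omega,
            wordOf_snoc (by omega), NFAL.RunOn_snoc]
          have hcongr : wordOf (fun m => if m = i + u then a' else b₀ m) i (i + u - 1)
              = wordOf b₀ i (i + u - 1) :=
            wordOf_congr (fun m h1 h2 => by simp [show m ≠ i + u from by omega])
          rw [hcongr]
          refine ⟨q₀, hbrun, ?_⟩
          rw [show i + u - 1 + 1 = i + u from by omega]
          simpa using hmem
        · intro m h1 h2
          by_cases hm : m = i + u
          · subst hm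
            simpa using hns
          · have := hbsat m h1 (by omega)
            simpa [hm] using this
  have hwit : ∀ k q a' q', Rch k q → q' ∈ A.trans q a' → ¬ NNF.sat ρ (i + k) (args a') →
      A.final q' = true → I.mem (ρ.tm (i + k) - ρ.tm i) → False := by
    intro k q a' q' hr hmem hns hf hIm
    cases k with
    | zero =>
      have hq : q = A.init := hr
      subst hq
      refine hno ⟨i, le_rfl, by simpa using hIm, fun _ => a',
        ⟨wordOf_ne_nil le_rfl, q', hf, by rw [wordOf_single]; exact ⟨q', hmem, rfl⟩⟩, ?_⟩
      intro m h1 h2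
      have : m = i := by omega
      subst this
      simpa using hns
    | succ k =>
      obtain ⟨b, hbrun, hbsat⟩ := hword (k + 1) (by omega) q hr
      refine hno ⟨i + (k + 1), by omega, hIm, fun m => if m = i + (k + 1) then a' else b m,
        ⟨wordOf_ne_nil (by omega), q', hf, ?_⟩, ?_⟩
      · rw [show i + (k + 1) = (i + k) + 1 from rfl, wordOf_snoc (by omega), NFAL.RunOn_snoc]
        have hcongr : wordOf (fun m => if m = i + k + 1 then a' else b m) i (i + k)
            = wordOf b i (i + k) :=
          wordOf_congr (fun m h1 h2 => by simp [show m ≠ i + k + 1 from by omega])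
        rw [hcongr]
        refine ⟨q, ?_, by simp [hmem]⟩
        rw [show i + k = i + (k + 1) - 1 from by omega]
        exact hbrun
      · intro m h1 h2
        by_cases hm : m = i + (k + 1)
        · subst hm
          show ¬ NNF.sat ρ (i + (k + 1)) (args (if i + (k + 1) = i + (k + 1) then a' else b (i + (k + 1))))
          rw [if_pos rfl]
          exact hns
        · have hb := hbsat m h1 (by omega)
          show ¬ NNF.sat ρ m (args (if m = i + (k + 1) then a' else b m))
          rw [if_neg hm]
          exact hb
  -- components for every position/letter pair
  let dec : ℕ → Fin n := fun k => ⟨k % n, Nat.mod_lt _ hn⟩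
  have comp : ∀ k : ℕ, ∃ (W : ℕ → Set (locT (args (dec k)) × ℝ))
      (EE : ℕ → (locT (args (dec k)) × ℝ) → (locT (args (dec k)) × ℝ) → Prop),
      (NNF.sat ρ (k / n) (args (dec k)) →
        GSat (W (k / n + 1)) 0 (entG (args (dec k)) (ρ.sym (k / n)))) ∧
      ConsAt (intG (args (dec k))) ρ W EE ∧ PathsOK (finalP (args (dec k))) W EE := by
    intro k
    by_cases h : NNF.sat ρ (k / n) (args (dec k))
    · obtain ⟨W, EE, he, hc, hp⟩ := (ih (dec k) (k / n)).mpr h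
      exact ⟨W, EE, fun _ => he, hc, hp⟩
    · exact ⟨fun _ => ∅, fun _ _ _ => False, fun hs => absurd hs h,
        consAt_empty _ _, pathsOK_empty _⟩
  choose W EE hent hcon hpat using comp
  let inj : ∀ k : ℕ, locT (args (dec k)) → locT (NNF.dauto n A I args) :=
    fun k m => Sum.inr ⟨dec k, m⟩
  have hinj : ∀ k, Function.Injective (inj k) := by
    intro k x y h
    have h2 : (⟨dec k, x⟩ : Σ b : Fin n, locT (args b)) = ⟨dec k, y⟩ := by
      injection h
    injection h2 with h3 h4
  have hδc : ∀ (k : ℕ) (m : locT (args (dec k))) (σ : AP → Bool),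
      intG (NNF.dauto n A I args) (inj k m) σ = (intG (args (dec k)) m σ).map (inj k) :=
    fun k m σ => intG_dauto_inr σ n A I args (dec k) m
  have hfinc : ∀ (k : ℕ) (m : locT (args (dec k))),
      finalP (NNF.dauto n A I args) (inj k m) ↔ finalP (args (dec k)) m := by
    intro k m
    rw [show inj k m = Sum.inr ⟨dec k, m⟩ from rfl, finalP_dauto_inr]
  let F : ℕ → ((ℕ → Set (locT (NNF.dauto n A I args) × ℝ)) ×
      (ℕ → (locT (NNF.dauto n A I args) × ℝ) → (locT (NNF.dauto n A I args) × ℝ) → Prop)) :=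
    fun k => (pushV (inj k) (W k), pushE (inj k) (EE k))
  obtain ⟨Eu, hcu, hpu, hedom⟩ := union_frag F
    (fun k => push_consAt (inj k) (hinj k) (hδc k) (hcon k))
    (fun k => push_pathsOK (inj k) (hinj k) (hfinc k) (hcon k) (hpat k))
  let Vu : ℕ → Set (locT (NNF.dauto n A I args) × ℝ) := fun j => ⋃ k, (F k).1 j
  let Vch : ℕ → Set (locT (NNF.dauto n A I args) × ℝ) := fun j =>
    {sv | ∃ q : ℕ, sv = (Sum.inl q, ρ.tm (j - 1) - ρ.tm i) ∧ i + 1 ≤ j ∧ Rch (j - i) q}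
  let VV : ℕ → Set (locT (NNF.dauto n A I args) × ℝ) := fun j => Vch j ∪ Vu j
  let EB : ℕ → (locT (NNF.dauto n A I args) × ℝ) → (locT (NNF.dauto n A I args) × ℝ) → Prop :=
    fun j sv t =>
      ((∃ q : ℕ, sv.1 = Sum.inl q) ∧ t ∈ VV (j + 1)) ∨
      ((∃ x, sv.1 = Sum.inr x) ∧ Eu j sv t)
  have hVuInr : ∀ j sv, sv ∈ Vu j → ∃ x, sv.1 = Sum.inr x := by
    intro j sv h
    obtain ⟨k, hk⟩ := Set.mem_iUnion.mp h
    obtain ⟨mw, -, rfl⟩ := hk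
    exact ⟨_, rfl⟩
  have hstep : ∀ (j q : ℕ), i ≤ j → Rch (j - i) q →
      GSat (VV (j + 1)) (ρ.tm j - ρ.tm i) (stepDG n A I args q (ρ.sym j)) := by
    intro j q hij hrch
    unfold stepDG
    refine GSat_bigAnd.mpr ?_
    intro γ hγmem
    obtain ⟨a', rfl⟩ := List.mem_ofFn.mp hγmem
    by_cases hs : NNF.sat ρ j (args a')
    · -- entry disjunct
      left
      have hk1 : dec (n * j + (a' : ℕ)) = a' := by
        have : (n * j + (a' : ℕ)) % n = (a' : ℕ) := by
          rw [Nat.mul_add_mod]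
          exact Nat.mod_eq_of_lt a'.isLt
        exact Fin.ext this
      have hk2 : (n * j + (a' : ℕ)) / n = j := by
        rw [Nat.mul_add_div hn, Nat.div_eq_of_lt a'.isLt]
        rfl
      rw [← hk1]
      have hee := hent (n * j + (a' : ℕ)) (by rw [hk1, hk2]; exact hs)
      rw [hk2] at hee
      have h1 := push_entry (inj (n * j + (a' : ℕ))) (W (n * j + (a' : ℕ))) (j + 1) hee
      have h2 : GSat (VV (j + 1)) 0
          ((entG (args (dec (n * j + (a' : ℕ)))) (ρ.sym j)).map (inj (n * j + (a' : ℕ)))) :=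
        GSat_mono (fun t ht => Or.inr (Set.mem_iUnion.mpr ⟨n * j + (a' : ℕ), ht⟩)) h1
      exact (entG_map_indep _ _ _ _ _).mpr h2
    · -- successor conjunct
      right
      refine GSat_bigAnd.mpr ?_
      intro γ2 hmem2
      obtain ⟨q', hq'mem, rfl⟩ := List.mem_map.mp hmem2
      have hrch' : Rch (j + 1 - i) q' := by
        rw [show j + 1 - i = (j - i) + 1 from by omega]
        refine ⟨q, a', hrch, hq'mem, ?_⟩
        rw [show i + (j - i) = j from by omega]
        exact hs
      have hloc : ((Sum.inl q' : locT (NNF.dauto n A I args)), ρ.tm j - ρ.tm i) ∈ VV (j + 1) :=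
        Or.inl ⟨q', rfl, by omega, hrch'⟩
      by_cases hf : A.final q' = true
      · rw [if_pos hf]
        refine ⟨hloc, GSat_dual_toGamma.mpr ?_⟩
        intro hIm
        refine hwit (j - i) q a' q' hrch hq'mem ?_ hf ?_
        · rw [show i + (j - i) = j from by omega]; exact hs
        · rw [show i + (j - i) = j from by omega]; exact hIm
      · rw [if_neg hf]
        exact hloc
  refine ⟨VV, EB, ?_, ?_, ?_⟩
  · rw [entG_dauto]
    show GSat (VV (i + 1)) (0 : ℝ) (stepDG n A I args A.init (ρ.sym i))
    have h := hstep i A.init le_rfl (by rw [Nat.sub_self]; rfl)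
    rwa [sub_self] at h
  · intro j sv hsv
    rcases hsv with hch | hu
    · obtain ⟨q, rfl, hj1, hrch⟩ := hch
      constructor
      · rw [intG_dauto_inl]
        show GSat {t | EB j (Sum.inl q, ρ.tm (j - 1) - ρ.tm i) t}
          (ρ.tm (j - 1) - ρ.tm i + delay ρ j) (stepDG n A I args q (ρ.sym j))
        rw [tm_clock ρ i j (by omega)]
        refine GSat_mono ?_ (hstep j q (by omega) hrch)
        intro t ht
        exact Or.inl ⟨⟨q, rfl⟩, ht⟩
      · rintro t (⟨-, hmem⟩ | ⟨⟨x, habs⟩, -⟩)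
        · exact hmem
        · exact absurd habs (by simp)
    · have h1 := hcu j sv hu
      constructor
      · refine GSat_mono ?_ h1.1
        intro t ht
        exact Or.inr ⟨hVuInr j sv hu, ht⟩
      · rintro t (⟨⟨q, habs⟩, -⟩ | ⟨-, hEu⟩)
        · obtain ⟨x, hx⟩ := hVuInr j sv hu
          rw [hx] at habs
          exact absurd habs (by simp)
        · exact Or.inr (h1.2 t hEu)
  · intro j p hp0 hedge N
    have hmemV : ∀ m, p m ∈ VV (j + m) := by
      intro m
      induction m with
      | zero => exact hp0
      | succ m ih' =>
        rcases hedge m with ⟨-, hmem⟩ | ⟨-, hEu⟩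
        · exact hmem
        · exact Or.inr (hedom _ _ _ hEu).2
    by_cases hinf : ∀ N', ∃ m, N' ≤ m ∧ ∃ q : ℕ, (p m).1 = (Sum.inl q : locT (NNF.dauto n A I args))
    · obtain ⟨m, hm, q, hq⟩ := hinf N
      refine ⟨m, hm, ?_⟩
      rw [hq, finalP_dauto_inl]
      trivial
    · have hinf' : ∃ N', ∀ m, N' ≤ m →
          ¬∃ q : ℕ, (p m).1 = (Sum.inl q : locT (NNF.dauto n A I args)) := by
        by_contra hcon
        apply hinf
        intro N'
        by_contra hxx
        exact hcon ⟨N', fun m hm hex => hxx ⟨m, hm, hex⟩⟩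
      obtain ⟨N', hN'⟩ := hinf'
      have htail : ∀ m, p (N' + m) ∈ Vu (j + (N' + m)) := by
        intro m
        rcases hmemV (N' + m) with hch | hu
        · obtain ⟨q, hq, -, -⟩ := hch
          exact absurd ⟨q, show (p (N' + m)).1 = (Sum.inl q : locT (NNF.dauto n A I args)) by
            rw [hq]⟩ (hN' (N' + m) (by omega))
        · exact hu
      have hEtail : ∀ m, Eu (j + N' + m) (p (N' + m)) (p (N' + m + 1)) := by
        intro m
        rcases hedge (N' + m) with ⟨⟨q, hq⟩, -⟩ | ⟨-, hEu⟩
        · exact absurd ⟨q, hq⟩ (hN' (N' + m) (by omega))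
        · rw [show j + N' + m = j + (N' + m) from by omega]
          exact hEu
      obtain ⟨m, hm, hfinm⟩ := hpu (j + N') (fun m => p (N' + m))
        (by
          have h0 := htail 0
          rwa [show j + (N' + 0) = j + N' from by omega] at h0) hEtail N
      exact ⟨N' + m, by omega, hfinm⟩
section Main

variable {AP : Type}

theorem accF_iff_sat (φ : NNF AP) (ρ : TimedWord (AP → Bool)) :
    ∀ i, AccF φ ρ i ↔ NNF.sat ρ i φ := by
  induction φ with
  | top =>
    intro i
    constructor
    · intro _; trivial
    · intro _
      exact ⟨fun _ => ∅, fun _ _ _ => False, by rw [entG_top]; trivial,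
        consAt_empty _ _, pathsOK_empty _⟩
  | bot =>
    intro i
    constructor
    · rintro ⟨V, E, he, -, -⟩; rw [entG_bot] at he; exact he.elim
    · intro h; exact h.elim
  | atom p =>
    intro i
    constructor
    · rintro ⟨V, E, he, -, -⟩
      rw [entG_atom] at he
      by_cases h : ρ.sym i p = true
      · exact h
      · rw [if_neg h] at he; exact he.elim
    · intro h
      refine ⟨fun _ => ∅, fun _ _ _ => False, ?_, consAt_empty _ _, pathsOK_empty _⟩
      have h' : ρ.sym i p = true := h
      rw [entG_atom, if_pos h']; trivial
  | natom p =>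
    intro i
    constructor
    · rintro ⟨V, E, he, -, -⟩
      rw [entG_natom] at he
      by_cases h : ρ.sym i p = true
      · rw [if_pos h] at he; exact he.elim
      · show ρ.sym i p = false
        simpa using h
    · intro h
      refine ⟨fun _ => ∅, fun _ _ _ => False, ?_, consAt_empty _ _, pathsOK_empty _⟩
      have h0 : ρ.sym i p = false := h
      have h' : ¬ ρ.sym i p = true := by simp [h0]
      rw [entG_natom, if_neg h']; trivial
  | and φ ψ ihφ ihψ =>
    intro i
    constructor
    · rintro ⟨V, E, he, hc, hp⟩
      rw [entG_and] at he
      obtain ⟨he1, he2⟩ := he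
      exact ⟨(ihφ i).mp (pull_accF Sum.inl (fun m σ => intG_and_inl σ φ ψ m)
          (fun m => Iff.rfl) hc hp subset_rfl he1),
        (ihψ i).mp (pull_accF Sum.inr (fun m σ => intG_and_inr σ φ ψ m)
          (fun m => Iff.rfl) hc hp subset_rfl he2)⟩
    · rintro ⟨h1, h2⟩
      obtain ⟨V₁, E₁, he1, hc1, hp1⟩ := (ihφ i).mpr h1
      obtain ⟨V₂, E₂, he2, hc2, hp2⟩ := (ihψ i).mpr h2
      let F : ℕ → ((ℕ → Set (locT (φ.and ψ) × ℝ)) ×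
          (ℕ → (locT (φ.and ψ) × ℝ) → (locT (φ.and ψ) × ℝ) → Prop)) := fun k =>
        if k = 0 then (pushV Sum.inl V₁, pushE Sum.inl E₁)
        else if k = 1 then (pushV Sum.inr V₂, pushE Sum.inr E₂)
        else (fun _ => ∅, fun _ _ _ => False)
      have hFc : ∀ k, ConsAt (intG (φ.and ψ)) ρ (F k).1 (F k).2 := by
        intro k
        match k with
        | 0 => exact push_consAt Sum.inl Sum.inl_injective (fun m σ => intG_and_inl σ φ ψ m) hc1
        | 1 => exact push_consAt Sum.inr Sum.inr_injective (fun m σ => intG_and_inr σ φ ψ m) hc2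
        | (k+2) => exact consAt_empty _ _
      have hFp : ∀ k, PathsOK (finalP (φ.and ψ)) (F k).1 (F k).2 := by
        intro k
        match k with
        | 0 => exact push_pathsOK Sum.inl Sum.inl_injective (fun m => Iff.rfl) hc1 hp1
        | 1 => exact push_pathsOK Sum.inr Sum.inr_injective (fun m => Iff.rfl) hc2 hp2
        | (k+2) => exact pathsOK_empty _
      obtain ⟨Eu, hcu, hpu, -⟩ := union_frag F hFc hFp
      refine ⟨fun j => ⋃ k, (F k).1 j, Eu, ?_, hcu, hpu⟩
      rw [entG_and]
      constructor
      · refine GSat_mono ?_ (push_entry (φb := φ.and ψ) (f := (Sum.inl : locT φ → locT (φ.and ψ))) V₁ (i+1) he1)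
        intro t ht
        exact Set.mem_iUnion.mpr ⟨0, ht⟩
      · refine GSat_mono ?_ (push_entry (φb := φ.and ψ) (f := (Sum.inr : locT ψ → locT (φ.and ψ))) V₂ (i+1) he2)
        intro t ht
        exact Set.mem_iUnion.mpr ⟨1, ht⟩
  | or φ ψ ihφ ihψ =>
    intro i
    constructor
    · rintro ⟨V, E, he, hc, hp⟩
      rw [entG_or] at he
      rcases he with he1 | he2
      · exact Or.inl ((ihφ i).mp (pull_accF Sum.inl (fun m σ => intG_or_inl σ φ ψ m)
          (fun m => Iff.rfl) hc hp subset_rfl he1))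
      · exact Or.inr ((ihψ i).mp (pull_accF Sum.inr (fun m σ => intG_or_inr σ φ ψ m)
          (fun m => Iff.rfl) hc hp subset_rfl he2))
    · rintro (h1 | h2)
      · obtain ⟨V₁, E₁, he1, hc1, hp1⟩ := (ihφ i).mpr h1
        exact ⟨pushV Sum.inl V₁, pushE Sum.inl E₁,
          by rw [entG_or]; exact Or.inl (push_entry _ V₁ (i+1) he1),
          push_consAt Sum.inl Sum.inl_injective (fun m σ => intG_or_inl σ φ ψ m) hc1,
          push_pathsOK Sum.inl Sum.inl_injective (fun m => Iff.rfl) hc1 hp1⟩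
      · obtain ⟨V₂, E₂, he2, hc2, hp2⟩ := (ihψ i).mpr h2
        exact ⟨pushV Sum.inr V₂, pushE Sum.inr E₂,
          by rw [entG_or]; exact Or.inr (push_entry _ V₂ (i+1) he2),
          push_consAt Sum.inr Sum.inr_injective (fun m σ => intG_or_inr σ φ ψ m) hc2,
          push_pathsOK Sum.inr Sum.inr_injective (fun m => Iff.rfl) hc2 hp2⟩
  | auto n A I args ih =>
    intro i
    exact ⟨fun h => auto_bwd ih h, fun h => auto_fwd ih h⟩
  | dauto n A I args ih =>
    intro i
    exact ⟨fun h => dauto_bwd ih h, fun h => dauto_fwd ih h⟩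

end Main
section Boundary

variable {AP : Type}

theorem lang_iff_accF (φ : NNF AP) (ρ : TimedWord (AP → Bool)) :
    ρ ∈ OCATALang (Aphi φ) ↔ AccF φ ρ 0 := by
  constructor
  · rintro ⟨R, ⟨hinit, hstep⟩, hacc⟩
    have hc : ConsAt (Aphi φ).δ ρ R.V R.edge := hstep
    have hp : PathsOK (Aphi φ).final R.V R.edge := hacc
    refine ⟨pullV some R.V, pullE some R.edge, ?_, ?_, ?_⟩
    · have h0 := (hstep 0 (none, 0) hinit).1
      have hδ : (Aphi φ).δ none (ρ.sym 0) = .reset ((entG φ (ρ.sym 0)).map some) := rfl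
      rw [hδ] at h0
      have h0' : GSat {t | R.edge 0 (none, 0) t} 0 ((entG φ (ρ.sym 0)).map some) := h0
      rw [GSat_map] at h0'
      refine GSat_mono ?_ h0'
      intro t ht
      exact (hstep 0 (none, 0) hinit).2 _ ht
    · exact pull_consAt some (fun m σ => rfl) hc
    · exact pull_pathsOK some (fun m => Iff.rfl) hp
  · rintro ⟨V, E, he, hc, hp⟩
    classical
    refine ⟨⟨fun j => if j = 0 then {((none : Option (locT φ)), (0:ℝ))} else pushV some V j,
      fun j sv t => (sv.1 = none ∧ t ∈ pushV some V 1 ∧ j = 0) ∨ pushE some E j sv t⟩,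
      ⟨?_, ?_⟩, ?_⟩
    · show ((none : Option (locT φ)), (0:ℝ)) ∈ ({((none : Option (locT φ)), (0:ℝ))} : Set _)
      rfl
    · intro j sv hsv
      match j with
      | 0 =>
        have hsv' : sv = ((none : Option (locT φ)), (0:ℝ)) := hsv
        subst hsv'
        constructor
        · show GSat _ (0 + delay ρ 0) (.reset ((entG φ (ρ.sym 0)).map some))
          show GSat _ (0:ℝ) ((entG φ (ρ.sym 0)).map some)
          rw [GSat_map]
          refine GSat_mono ?_ he
          rintro ⟨m, w⟩ hmw
          exact Or.inl ⟨rfl, ⟨(m, w), hmw, rfl⟩, rfl⟩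
        · rintro t (⟨-, hmem, -⟩ | hpe)
          · exact hmem
          · obtain ⟨mw, mw', habs, -, -⟩ := hpe
            exact absurd (congrArg Prod.fst habs) (by simp)
      | (k + 1) =>
        have hsv' : sv ∈ pushV some V (k + 1) := hsv
        obtain ⟨⟨m, w⟩, hmw, rfl⟩ := hsv'
        constructor
        · show GSat _ _ ((intG φ m (ρ.sym (k + 1))).map some)
          rw [GSat_map]
          refine GSat_mono ?_ (hc (k + 1) (m, w) hmw).1
          rintro ⟨m', w'⟩ hE
          exact Or.inr ⟨(m, w), (m', w'), rfl, rfl, hE⟩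
        · rintro t (⟨habs, -, -⟩ | hpe)
          · exact absurd habs (by simp)
          · obtain ⟨mw, mw', heq, rfl, hE⟩ := hpe
            have hmm : mw = (m, w) := prod_map_inj (Option.some_injective _) heq.symm
            subst hmm
            show (some mw'.1, mw'.2) ∈ pushV some V (k + 1 + 1)
            exact ⟨mw', (hc (k + 1) (m, w) hmw).2 mw' hE, rfl⟩
    · -- acceptance
      have helper : ∀ (j' : ℕ) (p' : ℕ → Option (locT φ) × ℝ),
          p' 0 ∈ pushV some V j' →
          (∀ m, ((p' m).1 = none ∧ p' (m + 1) ∈ pushV some V 1 ∧ j' + m = 0) ∨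
            pushE some E (j' + m) (p' m) (p' (m + 1))) →
          ∀ N, ∃ m, N ≤ m ∧ (Aphi φ).final (p' m).1 := by
        intro j' p' hp0 hedge N
        have hsome : ∀ m, ∃ mw : locT φ × ℝ, p' m = (some mw.1, mw.2) := by
          intro m
          induction m with
          | zero => obtain ⟨mw, _, heq⟩ := hp0; exact ⟨mw, heq.symm⟩
          | succ m ih =>
            rcases hedge m with ⟨h1, -, -⟩ | ⟨mw, mw', -, h2, -⟩
            · obtain ⟨mw, hmw⟩ := ih
              rw [hmw] at h1
              exact absurd h1 (by simp)
            · exact ⟨mw', h2⟩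
        have hE : ∀ m, pushE some E (j' + m) (p' m) (p' (m + 1)) := by
          intro m
          rcases hedge m with ⟨h1, -, -⟩ | h
          · obtain ⟨mw, hmw⟩ := hsome m
            rw [hmw] at h1
            exact absurd h1 (by simp)
          · exact h
        exact push_pathsOK some (Option.some_injective _) (fun m => Iff.rfl) hc hp
          j' p' hp0 hE N
      intro j p hp0 hedge N
      match j with
      | 0 =>
        have hp0' : p 0 = ((none : Option (locT φ)), (0:ℝ)) := hp0
        have h1 : p 1 ∈ pushV some V 1 := by
          rcases hedge 0 with ⟨-, hmem, -⟩ | ⟨mw, mw', habs, -, -⟩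
          · exact hmem
          · rw [hp0'] at habs
            exact absurd (congrArg Prod.fst habs) (by simp)
        obtain ⟨m, hm, hfin⟩ := helper 1 (fun m => p (1 + m)) (by
            show p (1 + 0) ∈ _
            rw [show 1 + 0 = 1 by rfl]
            exact h1)
          (fun m => by
            have h := hedge (m + 1)
            rw [Nat.zero_add] at h
            simp only [show 1 + m = m + 1 from by omega,
              show 1 + (m + 1) = m + 1 + 1 from by omega]
            exact h) N
        exact ⟨1 + m, by omega, hfin⟩
      | (k + 1) =>
        have hp0' : p 0 ∈ pushV some V (k + 1) := hp0
        exact helper (k + 1) p hp0' (fun m => hedge m) N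

end Boundary
/-- The OCATA A_φ accepts exactly the timed language of φ: ⟦A_φ⟧ = ⟦φ⟧. -/
theorem Aphi_lang {AP : Type} (φ : NNF AP) :
    OCATALang (Aphi φ) = {ρ : TimedWord (AP → Bool) | NNF.sat ρ 0 φ} := by
  ext ρ
  rw [Set.mem_setOf_eq, ← accF_iff_sat φ ρ 0]
  exact lang_iff_accF φ ρ
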